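/- Let T be a lexicographically ordered ω₁-tree. Then for every countable set S ⊆ 𝓑(T), the closure of S in the order topology of the linear order (𝓑(T), <lex) is countable. -/

import Mathlib

noncomputable section

open Cardinal Set

def omega1 : Ordinal := (Cardinal.aleph 1).ord

def omega2 : Ordinal := (Cardinal.aleph 2).ord

/-- The height of an element `t`: the order type of its set of strict predecessors. -/
def htOf {X : Type} (lt : X → X → Prop)
    (wo : ∀ t : X, IsWellOrder {s : X // lt s t} fun a b => lt a.1 b.1) (t : X) : Ordinal :=
  @Ordinal.type {s : X // lt s t} (fun a b => lt a.1 b.1) (wo t)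

/-- A lexicographically ordered (normal) `ω₁`-tree. -/
structure LexOmega1Tree where
  T : Type
  lt : T → T → Prop
  lt_irrefl : ∀ a : T, ¬ lt a a
  lt_trans : ∀ {a b c : T}, lt a b → lt b c → lt a c
  /-- the strict predecessors of any element are well-ordered -/
  predWO : ∀ t : T, IsWellOrder {s : T // lt s t} fun a b => lt a.1 b.1
  /-- every level is countable -/
  level_countable : ∀ α : Ordinal, {t : T | htOf lt predWO t = α}.Countable
  /-- levels are nonempty exactly below `ω₁` -/
  level_nonempty : ∀ α : Ordinal, (∃ t : T, htOf lt predWO t = α) ↔ α < omega1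
  /-- normality: distinct elements of the same limit height have different predecessors -/
  normal : ∀ s t : T, htOf lt predWO s = htOf lt predWO t →
    Order.IsSuccLimit (htOf lt predWO s) → (∀ u : T, lt u s ↔ lt u t) → s = t
  /-- the lexicographic comparison of distinct elements of equal height -/
  lexlt : T → T → Prop
  lexlt_same : ∀ a b : T, lexlt a b → htOf lt predWO a = htOf lt predWO b ∧ a ≠ b
  lexlt_tricho : ∀ a b : T, htOf lt predWO a = htOf lt predWO b → a ≠ b →
    lexlt a b ∨ lexlt b a
  lexlt_asymm : ∀ a b : T, lexlt a b → ¬ lexlt b a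
  lexlt_trans : ∀ {a b c : T}, lexlt a b → lexlt b c → lexlt a c
  /-- coherence: the lexicographic comparison is decided at the splitting level -/
  lexlt_coh : ∀ a b a' b' : T, lexlt a b → lt a a' → lt b b' →
    htOf lt predWO a' = htOf lt predWO b' → lexlt a' b'

namespace LexOmega1Tree

variable (S : LexOmega1Tree)

def ht : S.T → Ordinal := htOf S.lt S.predWO

def le (a b : S.T) : Prop := S.lt a b ∨ a = b

/-- a cofinal branch : a downward closed chain meeting every level -/
def IsBranch (b : Set S.T) : Prop :=
  (∀ s t : S.T, t ∈ b → S.lt s t → s ∈ b) ∧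
  (∀ s t : S.T, s ∈ b → t ∈ b → s = t ∨ S.lt s t ∨ S.lt t s) ∧
  (∀ α : Ordinal, α < omega1 → ∃ t ∈ b, S.ht t = α)

/-- the set `𝓑(T)` of cofinal branches -/
def Branch : Type := {b : Set S.T // S.IsBranch b}

/-- the lexicographic order on branches (and on arbitrary sets of nodes) -/
def blex (A B : Set S.T) : Prop := ∃ a ∈ A, ∃ b ∈ B, S.lexlt a b

/-- the order topology on `(𝓑(T), <lex)`, generated by the open rays -/
def branchTop : TopologicalSpace S.Branch :=
  TopologicalSpace.generateFrom
    {s : Set S.Branch | ∃ a : S.Branch, s = {x | S.blex a.1 x.1} ∨ s = {x | S.blex x.1 a.1}}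

/-- `b` is a local right end point of the downward closed subtree `W` -/
def IsLocalRightEP (W b : Set S.T) : Prop :=
  ∃ t ∈ b, ∀ s ∈ b, S.ht t ≤ S.ht s →
    ∀ u ∈ W, S.ht u = S.ht s → S.le t u → u = s ∨ S.lexlt u s

/-- `b` is a local left end point of the downward closed subtree `W` -/
def IsLocalLeftEP (W b : Set S.T) : Prop :=
  ∃ t ∈ b, ∀ s ∈ b, S.ht t ≤ S.ht s →
    ∀ u ∈ W, S.ht u = S.ht s → S.le t u → u = s ∨ S.lexlt s u

def IsLocalEP (W b : Set S.T) : Prop := S.IsLocalRightEP W b ∨ S.IsLocalLeftEP W b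

end LexOmega1Tree


-- ===================== auxiliary development =====================

theorem omega1_isLimit : Order.IsSuccLimit omega1 := Cardinal.isSuccLimit_ord (Cardinal.aleph0_le_aleph 1)
theorem omega1_pos : (0 : Ordinal) < omega1 := omega1_isLimit.pos
theorem succ_lt_omega1 {a : Ordinal} (h : a < omega1) : a + 1 < omega1 := by
  have := omega1_isLimit.succ_lt h
  rwa [Ordinal.add_one_eq_succ]
theorem iSup_lt_omega1' {ι : Type} [Countable ι] (g : ι → Ordinal) (h : ∀ i, g i < omega1) :
    iSup g < omega1 := by
  have h' : ∀ i, g i < Ordinal.omega 1 := by simpa only [omega1, Cardinal.ord_aleph] using h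
  simpa only [omega1, Cardinal.ord_aleph] using Ordinal.iSup_lt_omega_one h'
theorem Iic_countable_of_lt_omega1 {o : Ordinal.{0}} (h : o < omega1) : (Set.Iic o).Countable := by
  have h1 : (Set.Iio (o+1)).Countable := by
    rw [Cardinal.countable_iff_lt_aleph_one, Ordinal.mk_Iio_ordinal]
    have hlt : (o+1).card < Cardinal.aleph 1 := Cardinal.lt_ord.mp (succ_lt_omega1 h)
    calc Cardinal.lift.{1} (o+1).card < Cardinal.lift.{1} (Cardinal.aleph 1) :=
          Cardinal.lift_lt.mpr hlt
      _ ≤ Cardinal.aleph 1 := by simp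
  exact h1.mono (by intro x hx; simpa [Set.mem_Iio, Order.lt_succ_iff] using hx)

theorem htOf_lt_htOf {X : Type} (lt : X → X → Prop)
    (wo : ∀ t : X, IsWellOrder {s : X // lt s t} fun a b => lt a.1 b.1)
    (htrans : ∀ {a b c : X}, lt a b → lt b c → lt a c)
    {s t : X} (h : lt s t) : htOf lt wo s < htOf lt wo t := by
  letI := wo s; letI := wo t
  refine @PrincipalSeg.ordinal_type_lt _ _ _ _ (wo s) (wo t)
    ⟨⟨⟨fun a => ⟨a.1, htrans a.2 h⟩, ?_⟩, ?_⟩, ⟨s, h⟩, ?_⟩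
  · intro a b hab
    have h2 := congrArg Subtype.val hab
    exact Subtype.ext h2
  · intro a b
    exact ⟨fun hab => hab, fun hab => hab⟩
  · intro b
    constructor
    · rintro ⟨a, rfl⟩; exact a.2
    · intro hb; exact ⟨⟨b.1, hb⟩, rfl⟩

namespace LexOmega1Tree

variable {S : LexOmega1Tree}

theorem ht_lt_of_lt {s t : S.T} (h : S.lt s t) : S.ht s < S.ht t :=
  htOf_lt_htOf S.lt S.predWO (fun hab hbc => S.lt_trans hab hbc) h

theorem ht_lt_omega1 (t : S.T) : S.ht t < omega1 := (S.level_nonempty (S.ht t)).mp ⟨t, rfl⟩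

theorem branch_mem_eq {x : S.Branch} {s t : S.T} (hs : s ∈ x.1) (ht : t ∈ x.1)
    (h : S.ht s = S.ht t) : s = t := by
  rcases x.2.2.1 s t hs ht with h1 | h1 | h1
  · exact h1
  · exact absurd h (ne_of_lt (ht_lt_of_lt h1))
  · exact absurd h.symm (ne_of_lt (ht_lt_of_lt h1))

theorem branch_mem_lt {x : S.Branch} {s t : S.T} (hs : s ∈ x.1) (ht : t ∈ x.1)
    (h : S.ht s < S.ht t) : S.lt s t := by
  rcases x.2.2.1 s t hs ht with h1 | h1 | h1
  · subst h1; exact absurd h (_root_.lt_irrefl _)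
  · exact h1
  · exact absurd (ht_lt_of_lt h1) (not_lt_of_gt h)

def bAt (x : S.Branch) (α : Ordinal) : S.T :=
  if h : α < omega1 then (x.2.2.2 α h).choose else (x.2.2.2 0 omega1_pos).choose

theorem bAt_mem (x : S.Branch) {α : Ordinal} (h : α < omega1) : bAt x α ∈ x.1 := by
  rw [bAt, dif_pos h]; exact (x.2.2.2 α h).choose_spec.1

theorem ht_bAt (x : S.Branch) {α : Ordinal} (h : α < omega1) : S.ht (bAt x α) = α := by
  rw [bAt, dif_pos h]; exact (x.2.2.2 α h).choose_spec.2

theorem eq_bAt_of_mem {x : S.Branch} {t : S.T} (h : t ∈ x.1) : t = bAt x (S.ht t) := by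
  have h1 := bAt_mem x (ht_lt_omega1 t)
  have h2 := ht_bAt x (ht_lt_omega1 t)
  exact branch_mem_eq h h1 h2.symm

theorem bAt_lt_bAt {x : S.Branch} {α γ : Ordinal} (h : α < γ) (hγ : γ < omega1) :
    S.lt (bAt x α) (bAt x γ) := by
  have hα := h.trans hγ
  exact branch_mem_lt (bAt_mem x hα) (bAt_mem x hγ)
    (by rw [ht_bAt x hα, ht_bAt x hγ]; exact h)

theorem bAt_agree_down {x y : S.Branch} {α γ : Ordinal} (h : bAt x γ = bAt y γ)
    (hγ : γ < omega1) (hle : α ≤ γ) : bAt x α = bAt y α := by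
  rcases eq_or_lt_of_le hle with rfl | hlt
  · exact h
  · have hα := hlt.trans hγ
    have hmem : bAt x α ∈ y.1 := by
      refine y.2.1 _ (bAt y γ) (bAt_mem y hγ) ?_
      rw [← h]; exact bAt_lt_bAt hlt hγ
    have h2 := eq_bAt_of_mem hmem
    rwa [ht_bAt x hα] at h2

theorem branch_ext {x y : S.Branch} (h : ∀ α, α < omega1 → bAt x α = bAt y α) : x = y := by
  apply Subtype.ext; ext t
  constructor
  · intro htx
    have h1 := eq_bAt_of_mem htx
    rw [h _ (ht_lt_omega1 t)] at h1
    rw [h1]; exact bAt_mem y (ht_lt_omega1 t)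
  · intro hty
    have h1 := eq_bAt_of_mem hty
    rw [← h _ (ht_lt_omega1 t)] at h1
    rw [h1]; exact bAt_mem x (ht_lt_omega1 t)

theorem branch_ext_unbdd {x y : S.Branch}
    (h : ∀ δ, δ < omega1 → ∃ α, δ ≤ α ∧ α < omega1 ∧ bAt x α = bAt y α) : x = y := by
  apply branch_ext; intro α hα
  obtain ⟨γ, h1, h2, h3⟩ := h α hα
  exact bAt_agree_down h3 h2 h1

def bl (x y : S.Branch) : Prop := S.blex x.1 y.1

theorem bl_iff {x y : S.Branch} :
    bl x y ↔ ∃ α, α < omega1 ∧ S.lexlt (bAt x α) (bAt y α) := by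
  constructor
  · rintro ⟨s, hs, t, ht, hl⟩
    have hh : S.ht s = S.ht t := (S.lexlt_same s t hl).1
    refine ⟨S.ht s, ht_lt_omega1 s, ?_⟩
    have e1 := eq_bAt_of_mem hs
    have e2 := eq_bAt_of_mem ht
    rw [← e1, hh, ← e2]; exact hl
  · rintro ⟨α, hα, hl⟩
    exact ⟨_, bAt_mem x hα, _, bAt_mem y hα, hl⟩

theorem lexlt_up {x y : S.Branch} {α γ : Ordinal} (hl : S.lexlt (bAt x α) (bAt y α))
    (hαγ : α ≤ γ) (hγ : γ < omega1) : S.lexlt (bAt x γ) (bAt y γ) := by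
  rcases eq_or_lt_of_le hαγ with rfl | hlt
  · exact hl
  · exact S.lexlt_coh _ _ _ _ hl (bAt_lt_bAt hlt hγ) (bAt_lt_bAt hlt hγ)
      (by show S.ht _ = S.ht _; rw [ht_bAt x hγ, ht_bAt y hγ])

theorem bl_asymm {x y : S.Branch} (h1 : bl x y) (h2 : bl y x) : False := by
  obtain ⟨α, hα, hl1⟩ := bl_iff.mp h1
  obtain ⟨γ, hγ, hl2⟩ := bl_iff.mp h2
  have hm : max α γ < omega1 := max_lt hα hγ
  exact S.lexlt_asymm _ _ (lexlt_up hl1 (le_max_left _ _) hm)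
    (lexlt_up hl2 (le_max_right _ _) hm)

theorem bl_irrefl {x : S.Branch} (h : bl x x) : False := by
  obtain ⟨α, hα, hl⟩ := bl_iff.mp h
  exact (S.lexlt_same _ _ hl).2 rfl

theorem bl_ne {x y : S.Branch} (h : bl x y) : x ≠ y := by rintro rfl; exact bl_irrefl h

theorem exists_ne_level {x y : S.Branch} (h : x ≠ y) :
    ∃ α, α < omega1 ∧ bAt x α ≠ bAt y α := by
  by_contra hc; push_neg at hc
  exact h (branch_ext hc)

theorem bl_tricho {x y : S.Branch} (h : x ≠ y) : bl x y ∨ bl y x := by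
  obtain ⟨α, hα, hne⟩ := exists_ne_level h
  have hh : S.ht (bAt x α) = S.ht (bAt y α) := by rw [ht_bAt x hα, ht_bAt y hα]
  rcases S.lexlt_tricho _ _ hh hne with h1 | h1
  · exact Or.inl (bl_iff.mpr ⟨α, hα, h1⟩)
  · exact Or.inr (bl_iff.mpr ⟨α, hα, h1⟩)

def Dl (x y : S.Branch) : Ordinal := sInf {γ | γ < omega1 ∧ bAt x γ ≠ bAt y γ}

theorem Dl_spec {x y : S.Branch} (h : x ≠ y) :
    Dl x y < omega1 ∧ bAt x (Dl x y) ≠ bAt y (Dl x y) := by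
  have hne : {γ | γ < omega1 ∧ bAt x γ ≠ bAt y γ}.Nonempty := by
    obtain ⟨α, hα, hna⟩ := exists_ne_level h; exact ⟨α, hα, hna⟩
  exact csInf_mem hne

theorem Dl_le {x y : S.Branch} {γ : Ordinal} (hγ : γ < omega1) (h : bAt x γ ≠ bAt y γ) :
    Dl x y ≤ γ := csInf_le (OrderBot.bddBelow _) ⟨hγ, h⟩

theorem eq_of_lt_Dl {x y : S.Branch} {γ : Ordinal} (hγ : γ < omega1) (h : γ < Dl x y) :
    bAt x γ = bAt y γ := by
  by_contra hc
  exact absurd (Dl_le hγ hc) (not_le_of_gt h)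

theorem Dl_symm (x y : S.Branch) : Dl x y = Dl y x := by
  unfold Dl
  congr 1
  ext γ
  constructor
  · rintro ⟨h1, h2⟩; exact ⟨h1, fun he => h2 he.symm⟩
  · rintro ⟨h1, h2⟩; exact ⟨h1, fun he => h2 he.symm⟩

theorem le_Dl {x y : S.Branch} (hxy : x ≠ y) {β : Ordinal}
    (h : ∀ γ, γ < β → bAt x γ = bAt y γ) : β ≤ Dl x y := by
  by_contra hc; push_neg at hc
  exact (Dl_spec hxy).2 (h _ hc)

theorem ne_at_of_Dl_le {x y : S.Branch} (hxy : x ≠ y) {γ} (hle : Dl x y ≤ γ)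
    (hγ : γ < omega1) : bAt x γ ≠ bAt y γ := by
  intro heq
  exact (Dl_spec hxy).2 (bAt_agree_down heq hγ hle)

theorem bl_lexlt_at {x y : S.Branch} (h : bl x y) {γ} (hle : Dl x y ≤ γ) (hγ : γ < omega1) :
    S.lexlt (bAt x γ) (bAt y γ) := by
  have hxy := bl_ne h
  have hne := ne_at_of_Dl_le hxy hle hγ
  have hh : S.ht (bAt x γ) = S.ht (bAt y γ) := by rw [ht_bAt x hγ, ht_bAt y hγ]
  rcases S.lexlt_tricho _ _ hh hne with h1 | h1
  · exact h1
  · exact absurd (bl_iff.mpr ⟨γ, hγ, h1⟩) (fun h2 => bl_asymm h h2)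


section Count

variable (f : ℕ → S.Branch)

@[reducible] def inW (t : S.T) : Prop := ∃ n, t ∈ (f n).1

theorem Dl_lt_omega1 (x y : S.Branch) : Dl x y < omega1 := by
  by_cases h : x = y
  · subst h
    have he : {γ | γ < omega1 ∧ bAt x γ ≠ bAt x γ} = ∅ := by
      ext γ; simp
    rw [Dl, he, Ordinal.sInf_empty]
    exact omega1_pos
  · exact (Dl_spec h).1

def rho : Ordinal := ⨆ p : ℕ × ℕ, (Dl (f p.1) (f p.2) + 1)

theorem rho_lt_omega1 : rho f < omega1 := by
  apply iSup_lt_omega1'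
  intro p
  exact succ_lt_omega1 (Dl_lt_omega1 _ _)

theorem Dl_lt_rho {m n : ℕ} (h : f m ≠ f n) : Dl (f m) (f n) < rho f := by
  have h1 : Dl (f m) (f n) + 1 ≤ rho f :=
    le_ciSup (Ordinal.bddAbove_range _) ((m, n) : ℕ × ℕ)
  rw [Ordinal.add_one_eq_succ, Order.succ_le_iff] at h1
  exact h1

theorem eq_of_agree_above_rho {m n : ℕ} {γ : Ordinal} (hγ1 : rho f ≤ γ) (hγ : γ < omega1)
    (h : bAt (f m) γ = bAt (f n) γ) : f m = f n := by
  by_contra hne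
  exact ne_at_of_Dl_le hne (le_trans (le_of_lt (Dl_lt_rho f hne)) hγ1) hγ h

theorem mem_range_of_subW {x : S.Branch} (h : ∀ α, α < omega1 → inW f (bAt x α)) :
    ∃ n, x = f n := by
  by_cases hU : ∃ n, ∀ δ, δ < omega1 → ∃ α, δ ≤ α ∧ α < omega1 ∧ bAt x α = bAt (f n) α
  · obtain ⟨n, hn⟩ := hU; exact ⟨n, branch_ext_unbdd hn⟩
  · exfalso
    push_neg at hU
    choose δ hδ1 hδ2 using hU
    have hαlt : iSup δ < omega1 := iSup_lt_omega1' δ hδ1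
    obtain ⟨n, hn⟩ := h (iSup δ) hαlt
    have heq : bAt x (iSup δ) = bAt (f n) (iSup δ) := by
      have h2 := eq_bAt_of_mem hn
      rwa [ht_bAt x hαlt] at h2
    exact hδ2 n (iSup δ) (le_ciSup (Ordinal.bddAbove_range _) n) hαlt heq

theorem exists_notinW {x : S.Branch} (hx : ∀ n, x ≠ f n) :
    ∃ α, α < omega1 ∧ ¬ inW f (bAt x α) := by
  by_contra hc; push_neg at hc
  obtain ⟨n, hn⟩ := mem_range_of_subW f hc
  exact hx n hn

def betaF (x : S.Branch) : Ordinal := sInf {α | α < omega1 ∧ ¬ inW f (bAt x α)}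

theorem betaF_spec {x : S.Branch} (hx : ∀ n, x ≠ f n) :
    betaF f x < omega1 ∧ ¬ inW f (bAt x (betaF f x)) := by
  have hne : {α | α < omega1 ∧ ¬ inW f (bAt x α)}.Nonempty := by
    obtain ⟨α, h1, h2⟩ := exists_notinW f hx; exact ⟨α, h1, h2⟩
  exact csInf_mem hne

theorem inW_of_lt_betaF {x : S.Branch} {γ : Ordinal} (hγ : γ < omega1) (h : γ < betaF f x) :
    inW f (bAt x γ) := by
  by_contra hc
  have h2 : betaF f x ≤ γ :=
    csInf_le (OrderBot.bddBelow _) (⟨hγ, hc⟩ : γ ∈ {α | α < omega1 ∧ ¬ inW f (bAt x α)})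
  exact absurd h2 (not_le_of_gt h)

theorem Dl_f_le_betaF {x : S.Branch} (hx : ∀ n, x ≠ f n) (n : ℕ) :
    Dl (f n) x ≤ betaF f x := by
  have hβ := (betaF_spec f hx).1
  by_contra hc; push_neg at hc
  have heq : bAt (f n) (betaF f x) = bAt x (betaF f x) := eq_of_lt_Dl hβ hc
  exact (betaF_spec f hx).2 ⟨n, heq ▸ bAt_mem (f n) hβ⟩

theorem exists_hang {x : S.Branch} (hx : ∀ n, x ≠ f n) (hβ : rho f < betaF f x) :
    ∃ n, ∀ γ, γ < betaF f x → bAt (f n) γ = bAt x γ := by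
  obtain ⟨n, hn⟩ := inW_of_lt_betaF f (rho_lt_omega1 f) hβ
  have hnρ : bAt (f n) (rho f) = bAt x (rho f) := by
    have h2 := eq_bAt_of_mem hn
    rw [ht_bAt x (rho_lt_omega1 f)] at h2
    exact h2.symm
  refine ⟨n, fun γ hγβ => ?_⟩
  have hγ1 : γ < omega1 :=  _root_.lt_trans hγβ (betaF_spec f hx).1
  rcases le_or_gt γ (rho f) with hle | hgt
  · exact bAt_agree_down hnρ (rho_lt_omega1 f) hle
  · obtain ⟨m, hm⟩ := inW_of_lt_betaF f hγ1 hγβ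
    have hmγ : bAt (f m) γ = bAt x γ := by
      have h2 := eq_bAt_of_mem hm
      rw [ht_bAt x hγ1] at h2
      exact h2.symm
    have hmρ : bAt (f m) (rho f) = bAt x (rho f) :=
      bAt_agree_down hmγ hγ1 (le_of_lt hgt)
    have hmn : f m = f n :=
      eq_of_agree_above_rho f (le_refl _) (rho_lt_omega1 f) (hmρ.trans hnρ.symm)
    rw [← hmn]; exact hmγ

theorem Dl_hang {x : S.Branch} (hx : ∀ n, x ≠ f n) {n : ℕ}
    (h : ∀ γ, γ < betaF f x → bAt (f n) γ = bAt x γ) : Dl (f n) x = betaF f x :=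
  le_antisymm (Dl_f_le_betaF f hx n) (le_Dl (Ne.symm (hx n)) h)

def ApB (x : S.Branch) : Prop :=
  (∃ n, bl (f n) x) ∧ ∀ c : S.Branch, bl c x → ∃ n, bl c (f n) ∧ bl (f n) x

def LimB : Set S.Branch := {x | (∀ n, x ≠ f n) ∧ ApB f x}

theorem middle_contra {x y : S.Branch} {m : ℕ} (h1 : bl x (f m)) (h2 : bl (f m) y)
    (hσω : Dl x (f m) < omega1)
    (hagree : ∀ γ, γ ≤ Dl x (f m) → bAt x γ = bAt y γ) : False := by
  have hxm : x ≠ f m := bl_ne h1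
  have hmy : f m ≠ y := bl_ne h2
  have e1 : bAt (f m) (Dl x (f m)) ≠ bAt y (Dl x (f m)) := by
    have hd : bAt x (Dl x (f m)) ≠ bAt (f m) (Dl x (f m)) := ne_at_of_Dl_le hxm le_rfl hσω
    rw [← hagree _ le_rfl]
    exact fun he => hd he.symm
  have h21 : Dl (f m) y ≤ Dl x (f m) := Dl_le hσω e1
  have hσ2ω : Dl (f m) y < omega1 := lt_of_le_of_lt h21 hσω
  have l1 : S.lexlt (bAt x (Dl x (f m))) (bAt (f m) (Dl x (f m))) := bl_lexlt_at h1 le_rfl hσω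
  have l2 : S.lexlt (bAt (f m) (Dl x (f m))) (bAt y (Dl x (f m))) :=
    bl_lexlt_at h2 h21 hσω
  rw [← hagree _ le_rfl] at l2
  exact S.lexlt_asymm _ _ l1 l2

theorem tInj_aux {x y : S.Branch} (hx : x ∈ LimB f) (hy : y ∈ LimB f)
    (ht : bAt x (betaF f x) = bAt y (betaF f y)) (hxy : bl x y) : False := by
  have hβx := (betaF_spec f hx.1).1
  have hβy := (betaF_spec f hy.1).1
  have hββ : betaF f x = betaF f y := by
    have e1 := ht_bAt x hβx
    have e2 := ht_bAt y hβy
    rw [← e1, ht, e2]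
  have ht' : bAt x (betaF f x) = bAt y (betaF f x) := by rw [ht, hββ]
  have hagree : ∀ γ, γ ≤ betaF f x → bAt x γ = bAt y γ := fun γ hγ =>
    bAt_agree_down ht' hβx hγ
  obtain ⟨m, h1, h2⟩ := hy.2.2 x hxy
  have hσβ : Dl x (f m) ≤ betaF f x := by
    rw [Dl_symm]; exact Dl_f_le_betaF f hx.1 m
  exact middle_contra f h1 h2 (lt_of_le_of_lt hσβ hβx)
    (fun γ hγ => hagree γ (le_trans hγ hσβ))

theorem tInj {x y : S.Branch} (hx : x ∈ LimB f) (hy : y ∈ LimB f)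
    (ht : bAt x (betaF f x) = bAt y (betaF f y)) : x = y := by
  by_contra hne
  rcases bl_tricho hne with h | h
  · exact tInj_aux f hx hy ht h
  · exact tInj_aux f hy hx ht.symm h

theorem countable_LimB_le_rho : {x | x ∈ LimB f ∧ betaF f x ≤ rho f}.Countable := by
  have hL : (⋃ γ ∈ Set.Iic (rho f), {t : S.T | S.ht t = γ}).Countable :=
    Set.Countable.biUnion (Iic_countable_of_lt_omega1 (rho_lt_omega1 f))
      (fun γ _ => S.level_countable γ)
  refine Set.MapsTo.countable_of_injOn (f := fun x => bAt x (betaF f x)) ?_ ?_ hL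
  · intro x hx
    exact Set.mem_biUnion hx.2 (ht_bAt x (betaF_spec f hx.1.1).1)
  · intro x hx y hy h
    exact tInj f hx.1 hy.1 h

def HangL (n : ℕ) : Set S.Branch :=
  {x | x ∈ LimB f ∧ rho f < betaF f x ∧
    (∀ γ, γ < betaF f x → bAt (f n) γ = bAt x γ) ∧ bl x (f n)}

def HangR (n : ℕ) : Set S.Branch :=
  {x | x ∈ LimB f ∧ rho f < betaF f x ∧
    (∀ γ, γ < betaF f x → bAt (f n) γ = bAt x γ) ∧ bl (f n) x}

theorem cover_hang {x : S.Branch} (hx : x ∈ LimB f) (hρ : rho f < betaF f x) :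
    (∃ n, x ∈ HangL f n) ∨ (∃ n, x ∈ HangR f n) := by
  obtain ⟨n, hn⟩ := exists_hang f hx.1 hρ
  rcases bl_tricho (hx.1 n) with h | h
  · exact Or.inl ⟨n, hx, hρ, hn, h⟩
  · exact Or.inr ⟨n, hx, hρ, hn, h⟩

theorem hangL_core {n : ℕ} {x y : S.Branch} (hx : x ∈ HangL f n) (hy : y ∈ HangL f n)
    (hxy : bl x y) : False := by
  obtain ⟨hxL, hρx, hax, hxa⟩ := hx
  obtain ⟨hyL, hρy, hay, hya⟩ := hy
  have hβx := (betaF_spec f hxL.1).1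
  have hβy := (betaF_spec f hyL.1).1
  have hDx : Dl (f n) x = betaF f x := Dl_hang f hxL.1 hax
  have hDy : Dl (f n) y = betaF f y := Dl_hang f hyL.1 hay
  -- first : betaF f x ≤ betaF f y
  have hββ : betaF f x ≤ betaF f y := by
    by_contra hc; push_neg at hc
    have hxat : bAt x (betaF f y) = bAt (f n) (betaF f y) := (hax _ hc).symm
    have hl : S.lexlt (bAt y (betaF f y)) (bAt (f n) (betaF f y)) := by
      refine bl_lexlt_at hya ?_ hβy
      rw [Dl_symm, hDy]
    rw [← hxat] at hl
    exact bl_asymm hxy (bl_iff.mpr ⟨betaF f y, hβy, hl⟩)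
  have hagree : ∀ γ, γ < betaF f x → bAt x γ = bAt y γ := fun γ hγ =>
    (hax γ hγ).symm.trans (hay γ (lt_of_lt_of_le hγ hββ))
  obtain ⟨m, h1, h2⟩ := hyL.2.2 x hxy
  have hσβ : Dl x (f m) ≤ betaF f x := by
    rw [Dl_symm]; exact Dl_f_le_betaF f hxL.1 m
  rcases lt_or_eq_of_le hσβ with hcase | hcase
  · exact middle_contra f h1 h2 ( _root_.lt_trans hcase hβx)
      (fun γ hγ => hagree γ (lt_of_le_of_lt hγ hcase))
  · -- Dl x (f m) = betaF f x : f m agrees with x strictly below betaF f x, so f m = f n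
    have hmx : ∀ γ, γ < betaF f x → bAt x γ = bAt (f m) γ := by
      intro γ hγ
      refine eq_of_lt_Dl ( _root_.lt_trans hγ hβx) ?_
      rw [hcase]; exact hγ
    have hmρ : bAt (f m) (rho f) = bAt (f n) (rho f) :=
      (hmx _ hρx).symm.trans ((hax _ hρx).symm)
    have hmn : f m = f n := eq_of_agree_above_rho f le_rfl (rho_lt_omega1 f) hmρ
    rw [hmn] at h2
    exact bl_asymm h2 hya

theorem hangR_core {n : ℕ} {x y : S.Branch} (hx : x ∈ HangR f n) (hy : y ∈ HangR f n)
    (hxy : bl x y) : False := by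
  obtain ⟨hxL, hρx, hax, hxa⟩ := hx
  obtain ⟨hyL, hρy, hay, hya⟩ := hy
  have hβx := (betaF_spec f hxL.1).1
  have hβy := (betaF_spec f hyL.1).1
  have hDx : Dl (f n) x = betaF f x := Dl_hang f hxL.1 hax
  have hDy : Dl (f n) y = betaF f y := Dl_hang f hyL.1 hay
  -- first : betaF f y ≤ betaF f x
  have hββ : betaF f y ≤ betaF f x := by
    by_contra hc; push_neg at hc
    have hyat : bAt y (betaF f x) = bAt (f n) (betaF f x) := (hay _ hc).symm
    have hl : S.lexlt (bAt (f n) (betaF f x)) (bAt x (betaF f x)) :=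
      bl_lexlt_at hxa (le_of_eq hDx) hβx
    rw [← hyat] at hl
    exact bl_asymm hxy (bl_iff.mpr ⟨betaF f x, hβx, hl⟩)
  have hagree : ∀ γ, γ < betaF f y → bAt x γ = bAt y γ := fun γ hγ =>
    (hax γ (lt_of_lt_of_le hγ hββ)).symm.trans (hay γ hγ)
  obtain ⟨m, h1, h2⟩ := hyL.2.2 x hxy
  have hσ2β : Dl (f m) y ≤ betaF f y := Dl_f_le_betaF f hyL.1 m
  rcases lt_or_eq_of_le hσ2β with hcase | hcase
  · -- Dl (f m) y < betaF f y : then Dl x (f m) ≤ Dl (f m) y < betaF f y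
    have hσ2ω : Dl (f m) y < omega1 := lt_of_lt_of_le hcase (le_of_lt hβy)
    have e : bAt x (Dl (f m) y) ≠ bAt (f m) (Dl (f m) y) := by
      have hd : bAt (f m) (Dl (f m) y) ≠ bAt y (Dl (f m) y) :=
        ne_at_of_Dl_le (bl_ne h2) le_rfl hσ2ω
      rw [hagree _ hcase]
      exact fun he => hd he.symm
    have hσ1 : Dl x (f m) ≤ Dl (f m) y := Dl_le hσ2ω e
    exact middle_contra f h1 h2 (lt_of_le_of_lt hσ1 hσ2ω)
      (fun γ hγ => hagree γ (lt_of_le_of_lt (le_trans hγ hσ1) hcase))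
  · -- Dl (f m) y = betaF f y : f m agrees with y strictly below betaF f y, so f m = f n
    have hmy : ∀ γ, γ < betaF f y → bAt (f m) γ = bAt y γ := by
      intro γ hγ
      refine eq_of_lt_Dl ( _root_.lt_trans hγ hβy) ?_
      rw [hcase]; exact hγ
    have hmρ : bAt (f m) (rho f) = bAt (f n) (rho f) :=
      (hmy _ hρy).trans ((hay _ hρy).symm)
    have hmn : f m = f n := eq_of_agree_above_rho f le_rfl (rho_lt_omega1 f) hmρ
    rw [hmn] at h1
    exact bl_asymm h1 hxa

theorem hangL_subsingleton (n : ℕ) : (HangL f n).Subsingleton := by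
  intro x hx y hy
  by_contra hne
  rcases bl_tricho hne with h | h
  · exact hangL_core f hx hy h
  · exact hangL_core f hy hx h

theorem hangR_subsingleton (n : ℕ) : (HangR f n).Subsingleton := by
  intro x hx y hy
  by_contra hne
  rcases bl_tricho hne with h | h
  · exact hangR_core f hx hy h
  · exact hangR_core f hy hx h

theorem LimB_countable : (LimB f).Countable := by
  have h1 := countable_LimB_le_rho f
  have h2 : (⋃ n, HangL f n).Countable :=
    Set.countable_iUnion (fun n => (hangL_subsingleton f n).countable)
  have h3 : (⋃ n, HangR f n).Countable :=
    Set.countable_iUnion (fun n => (hangR_subsingleton f n).countable)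
  have hsub : LimB f ⊆ {x | x ∈ LimB f ∧ betaF f x ≤ rho f} ∪
      ((⋃ n, HangL f n) ∪ (⋃ n, HangR f n)) := by
    intro x hx
    rcases le_or_gt (betaF f x) (rho f) with hle | hgt
    · exact Or.inl ⟨hx, hle⟩
    · rcases cover_hang f hx hgt with ⟨n, hn⟩ | ⟨n, hn⟩
      · exact Or.inr (Or.inl (Set.mem_iUnion.mpr ⟨n, hn⟩))
      · exact Or.inr (Or.inr (Set.mem_iUnion.mpr ⟨n, hn⟩))
  exact Set.Countable.mono hsub (h1.union (h2.union h3))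

end Count


def flipT (S : LexOmega1Tree) : LexOmega1Tree where
  T := S.T
  lt := S.lt
  lt_irrefl := S.lt_irrefl
  lt_trans := S.lt_trans
  predWO := S.predWO
  level_countable := S.level_countable
  level_nonempty := S.level_nonempty
  normal := S.normal
  lexlt := fun a b => S.lexlt b a
  lexlt_same := fun a b h => ⟨(S.lexlt_same b a h).1.symm, (S.lexlt_same b a h).2.symm⟩
  lexlt_tricho := fun a b h hne => S.lexlt_tricho b a h.symm hne.symm
  lexlt_asymm := fun a b h h2 => S.lexlt_asymm a b h2 h
  lexlt_trans := fun h1 h2 => S.lexlt_trans h2 h1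
  lexlt_coh := fun a b a' b' h haa hbb hht => S.lexlt_coh b a b' a' h hbb haa hht.symm

theorem branch_flipT : (flipT S).Branch = S.Branch := rfl

theorem bl_flipT {x y : S.Branch} :
    @bl (flipT S) x y ↔ bl y x := by
  constructor
  · rintro ⟨s, hs, t, ht, h⟩; exact ⟨t, ht, s, hs, h⟩
  · rintro ⟨s, hs, t, ht, h⟩; exact ⟨t, ht, s, hs, h⟩

def ApA (f : ℕ → S.Branch) (x : S.Branch) : Prop :=
  (∃ n, bl x (f n)) ∧ ∀ c : S.Branch, bl x c → ∃ n, bl (f n) c ∧ bl x (f n)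

def LimA (f : ℕ → S.Branch) : Set S.Branch := {x | (∀ n, x ≠ f n) ∧ ApA f x}

theorem LimA_countable (f : ℕ → S.Branch) : (LimA f).Countable := by
  have h := LimB_countable (S := flipT S) f
  refine Set.Countable.mono ?_ h
  intro x hx
  refine ⟨hx.1, ?_, ?_⟩
  · obtain ⟨n, hn⟩ := hx.2.1
    exact ⟨n, bl_flipT.mpr hn⟩
  · intro c hc
    obtain ⟨n, h1, h2⟩ := hx.2.2 c (bl_flipT.mp hc)
    exact ⟨n, bl_flipT.mpr h1, bl_flipT.mpr h2⟩

theorem notApB_open (f : ℕ → S.Branch) {x : S.Branch} (h : ¬ ApB f x) :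
    ∃ U : Set S.Branch,
      TopologicalSpace.GenerateOpen
        {s : Set S.Branch | ∃ a : S.Branch, s = {z | S.blex a.1 z.1} ∨ s = {z | S.blex z.1 a.1}} U ∧
      x ∈ U ∧ ∀ n, f n ∈ U → ¬ bl (f n) x := by
  rcases not_and_or.mp h with h1 | h2
  · push_neg at h1
    exact ⟨Set.univ, TopologicalSpace.GenerateOpen.univ, trivial, fun n _ => h1 n⟩
  · push_neg at h2
    obtain ⟨c, hc1, hc2⟩ := h2
    refine ⟨{z | S.blex c.1 z.1}, TopologicalSpace.GenerateOpen.basic _ ⟨c, Or.inl rfl⟩,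
      hc1, ?_⟩
    intro n hn
    exact hc2 n hn

theorem notApA_open (f : ℕ → S.Branch) {x : S.Branch} (h : ¬ ApA f x) :
    ∃ U : Set S.Branch,
      TopologicalSpace.GenerateOpen
        {s : Set S.Branch | ∃ a : S.Branch, s = {z | S.blex a.1 z.1} ∨ s = {z | S.blex z.1 a.1}} U ∧
      x ∈ U ∧ ∀ n, f n ∈ U → ¬ bl x (f n) := by
  rcases not_and_or.mp h with h1 | h2
  · push_neg at h1
    exact ⟨Set.univ, TopologicalSpace.GenerateOpen.univ, trivial, fun n _ => h1 n⟩
  · push_neg at h2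
    obtain ⟨c, hc1, hc2⟩ := h2
    refine ⟨{z | S.blex z.1 c.1}, TopologicalSpace.GenerateOpen.basic _ ⟨c, Or.inr rfl⟩,
      hc1, ?_⟩
    intro n hn
    exact hc2 n hn

theorem closure_subset (f : ℕ → S.Branch) :
    @closure _ S.branchTop (Set.range f) ⊆ Set.range f ∪ LimB f ∪ LimA f := by
  letI : TopologicalSpace S.Branch := S.branchTop
  intro x hx
  by_cases hA : x ∈ Set.range f
  · exact Or.inl (Or.inl hA)
  have hnx : ∀ n, x ≠ f n := fun n he => hA ⟨n, he.symm⟩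
  by_cases hB : ApB f x
  · exact Or.inl (Or.inr ⟨hnx, hB⟩)
  by_cases hC : ApA f x
  · exact Or.inr ⟨hnx, hC⟩
  exfalso
  obtain ⟨U, hUo, hxU, hU⟩ := notApB_open f hB
  obtain ⟨V, hVo, hxV, hV⟩ := notApA_open f hC
  have hopen : IsOpen (U ∩ V) :=
    TopologicalSpace.GenerateOpen.inter _ _ hUo hVo
  have hne := mem_closure_iff.mp hx (U ∩ V) hopen ⟨hxU, hxV⟩
  obtain ⟨z, hz1, hz2⟩ := hne
  obtain ⟨n, rfl⟩ := hz2
  rcases bl_tricho (hnx n) with h | h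
  · exact hV n hz1.2 h
  · exact hU n hz1.1 h

end LexOmega1Tree

/-- For a lexicographically ordered `ω₁`-tree `T`, the closure of every
countable subset of `(𝓑(T), <lex)` in the order topology is countable. -/
theorem stmt1 (S : LexOmega1Tree) (A : Set S.Branch) (hA : A.Countable) :
    (@closure _ S.branchTop A).Countable := by
  rcases A.eq_empty_or_nonempty with rfl | hne
  · rw [@closure_empty _ S.branchTop]
    exact Set.countable_empty
  obtain ⟨f, rfl⟩ := hA.exists_eq_range hne
  refine Set.Countable.mono (LexOmega1Tree.closure_subset f) ?_
  exact ((Set.countable_range f).union (LexOmega1Tree.LimB_countable f)).union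
    (LexOmega1Tree.LimA_countable f)
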